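/- Let V be a real symplectic vector space of dimension 2n with symplectic form ω. Then the Lefschetz map L : Λ^q V* → Λ^{q+2} V*, L(u) = ω ∧ u, is injective for all q ≤ n − 1. -/

import Mathlib

noncomputable section
set_option synthInstance.maxHeartbeats 1000000
set_option maxHeartbeats 2000000
namespace Stmt10Aux

open ExteriorAlgebra Module
open scoped CliffordAlgebra
open scoped Matrix

variable {V : Type*} [AddCommGroup V] [Module ℝ V] {n : ℕ}
variable (b : Basis (Fin (2 * n)) ℝ V) (B : V →ₗ[ℝ] V →ₗ[ℝ] ℝ)

local notation "E" => ExteriorAlgebra ℝ (Module.Dual ℝ V)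

def Amat : Matrix (Fin (2 * n)) (Fin (2 * n)) ℝ := Matrix.of fun i j => B (b i) (b j)

def Cmat : Matrix (Fin (2 * n)) (Fin (2 * n)) ℝ := (Amat b B)⁻¹

def xg (i : Fin (2 * n)) : E := ExteriorAlgebra.ι ℝ (b.coord i)

def Pk (k : Fin (2 * n)) : E →ₗ[ℝ] E :=
  CliffordAlgebra.contractLeft (Q := (0 : QuadraticForm ℝ (Module.Dual ℝ V)))
    (Module.Dual.eval ℝ V (b k))

def Nop : E →ₗ[ℝ] E := ∑ k, LinearMap.mulLeft ℝ (xg b k) ∘ₗ Pk b k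

def Kop : E →ₗ[ℝ] E := ∑ k, ∑ l, Cmat b B k l • (Pk b k ∘ₗ Pk b l)

def ωf : E := ∑ i, ∑ j, Amat b B i j • (xg b i * xg b j)

def yv (k : Fin (2 * n)) : Module.Dual ℝ V := ∑ j, Amat b B k j • b.coord j

lemma Pk_ι_mul (k : Fin (2 * n)) (w : Module.Dual ℝ V) (u : E) :
    Pk b k (ExteriorAlgebra.ι ℝ w * u) = w (b k) • u - ExteriorAlgebra.ι ℝ w * Pk b k u :=
  CliffordAlgebra.contractLeft_ι_mul _ _ _

lemma Pk_algebraMap (k : Fin (2 * n)) (r : ℝ) :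
    Pk b k (algebraMap ℝ E r) = 0 :=
  CliffordAlgebra.contractLeft_algebraMap _ _ r

lemma coord_delta (i k : Fin (2 * n)) : b.coord i (b k) = if i = k then 1 else 0 := by
  simp [Basis.coord_apply, Finsupp.single_apply, eq_comm]

lemma Pk_xg_mul (k i : Fin (2 * n)) (u : E) :
    Pk b k (xg b i * u) = (if i = k then (1:ℝ) else 0) • u - xg b i * Pk b k u := by
  rw [xg, Pk_ι_mul, coord_delta]

lemma ι_anticomm (w w' : Module.Dual ℝ V) :
    ExteriorAlgebra.ι ℝ w * ExteriorAlgebra.ι ℝ w'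
      = -(ExteriorAlgebra.ι ℝ w' * ExteriorAlgebra.ι ℝ w) := by
  rw [eq_neg_iff_add_eq_zero]
  exact ExteriorAlgebra.ι_add_mul_swap w w'

lemma Nop_apply (u : E) : Nop b u = ∑ k, xg b k * Pk b k u := by
  simp [Nop]

lemma Kop_apply (u : E) : Kop b B u = ∑ k, ∑ l, Cmat b B k l • Pk b k (Pk b l u) := by
  simp [Kop]

lemma omega_mul (u : E) :
    ωf b B * u = ∑ i, ∑ j, Amat b B i j • (xg b i * (xg b j * u)) := by
  rw [ωf, Finset.sum_mul]
  congr 1; ext i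
  rw [Finset.sum_mul]
  congr 1; ext j
  rw [smul_mul_assoc, mul_assoc]

lemma collapse1 (k : Fin (2 * n)) (f : Fin (2 * n) → ℝ) (z : E) :
    (∑ i, f i • ((if i = k then (1:ℝ) else 0) • z)) = f k • z := by
  rw [Finset.sum_eq_single k]
  · simp
  · intro i _ hik; simp [hik]
  · intro h; exact absurd (Finset.mem_univ k) h

lemma ι_yv (k : Fin (2 * n)) :
    ExteriorAlgebra.ι ℝ (yv b B k) = ∑ j, Amat b B k j • xg b j := by
  rw [yv, map_sum]
  simp [xg]

lemma yv_apply (l k : Fin (2 * n)) : yv b B l (b k) = Amat b B l k := by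
  rw [yv]
  simp only [LinearMap.coe_sum, Finset.sum_apply, LinearMap.smul_apply, coord_delta,
    smul_eq_mul]
  rw [Finset.sum_eq_single k]
  · simp
  · intro j _ hjk; simp [hjk]
  · intro h; exact absurd (Finset.mem_univ k) h


lemma Pk_omega (hanti : ∀ i j, Amat b B j i = - Amat b B i j) (k : Fin (2 * n)) (u : E) :
    Pk b k (ωf b B * u)
      = (2:ℝ) • (ExteriorAlgebra.ι ℝ (yv b B k) * u) + ωf b B * Pk b k u := by
  have expand : ∀ i j : Fin (2 * n), Pk b k (xg b i * (xg b j * u))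
      = (if i = k then (1:ℝ) else 0) • (xg b j * u)
        - (if j = k then (1:ℝ) else 0) • (xg b i * u)
        + xg b i * (xg b j * Pk b k u) := by
    intro i j
    rw [Pk_xg_mul, Pk_xg_mul, mul_sub, mul_smul_comm]
    abel
  have hS1 : (∑ i, ∑ j, Amat b B i j • ((if i = k then (1:ℝ) else 0) • (xg b j * u)))
      = ExteriorAlgebra.ι ℝ (yv b B k) * u := by
    rw [Finset.sum_comm]
    simp_rw [collapse1]
    rw [ι_yv, Finset.sum_mul]
    simp_rw [smul_mul_assoc]
  have hS2 : (∑ i, ∑ j, Amat b B i j • ((if j = k then (1:ℝ) else 0) • (xg b i * u)))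
      = -(ExteriorAlgebra.ι ℝ (yv b B k) * u) := by
    simp_rw [collapse1]
    rw [ι_yv, Finset.sum_mul, ← Finset.sum_neg_distrib]
    refine Finset.sum_congr rfl fun i _ => ?_
    rw [hanti k i, smul_mul_assoc, neg_smul]
  rw [omega_mul, map_sum]
  simp_rw [map_sum, map_smul, expand, smul_add, smul_sub, Finset.sum_add_distrib,
    Finset.sum_sub_distrib]
  rw [hS1, hS2, ← omega_mul]
  rw [sub_neg_eq_add, two_smul]


lemma PP_omega (hanti : ∀ i j, Amat b B j i = - Amat b B i j) (k l : Fin (2 * n)) (u : E) :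
    Pk b k (Pk b l (ωf b B * u)) =
      (2:ℝ) • (Amat b B l k • u)
        - (2:ℝ) • (ExteriorAlgebra.ι ℝ (yv b B l) * Pk b k u)
        + (2:ℝ) • (ExteriorAlgebra.ι ℝ (yv b B k) * Pk b l u)
        + ωf b B * Pk b k (Pk b l u) := by
  rw [Pk_omega b B hanti, map_add, map_smul, Pk_ι_mul, Pk_omega b B hanti, yv_apply, smul_sub]
  abel

lemma sumC_yv (hCA : Cmat b B * Amat b B = 1) (k : Fin (2 * n)) :
    (∑ l, Cmat b B k l • yv b B l) = b.coord k := by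
  simp_rw [yv, Finset.smul_sum, smul_smul]
  rw [Finset.sum_comm]
  simp_rw [← Finset.sum_smul, ← Matrix.mul_apply, hCA, Matrix.one_apply, ite_smul, one_smul,
    zero_smul]
  rw [Finset.sum_ite_eq]
  simp

lemma sumC_yv' (hCA : Cmat b B * Amat b B = 1)
    (hCanti : ∀ k l, Cmat b B l k = - Cmat b B k l) (l : Fin (2 * n)) :
    (∑ k, Cmat b B k l • yv b B k) = - b.coord l := by
  have h : ∀ k, Cmat b B k l • yv b B k = -(Cmat b B l k • yv b B k) := by
    intro k
    rw [hCanti l k]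
    exact neg_smul (Cmat b B l k) (yv b B k)
  simp_rw [h]
  rw [Finset.sum_neg_distrib, sumC_yv b B hCA]

lemma trace_CA (hCA : Cmat b B * Amat b B = 1) :
    (∑ k, ∑ l, Cmat b B k l * Amat b B l k) = (2 * n : ℝ) := by
  simp_rw [← Matrix.mul_apply, hCA, Matrix.one_apply_eq]
  rw [Finset.sum_const, Finset.card_univ, Fintype.card_fin, nsmul_eq_mul, mul_one]
  push_cast
  ring


lemma Kop_omega (hanti : ∀ i j, Amat b B j i = - Amat b B i j)
    (hCA : Cmat b B * Amat b B = 1)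
    (hCanti : ∀ k l, Cmat b B l k = - Cmat b B k l) (u : E) :
    Kop b B (ωf b B * u)
      = ωf b B * Kop b B u + ((4 * n : ℝ)) • u - (4:ℝ) • Nop b u := by
  have hU0 : (∑ k, ∑ l, Cmat b B k l • ((2:ℝ) • (Amat b B l k • u)))
      = ((4 * n : ℝ)) • u := by
    simp_rw [smul_smul, ← Finset.sum_smul]
    congr 1
    have : ∀ k l : Fin (2 * n), Cmat b B k l * (2 * Amat b B l k)
        = 2 * (Cmat b B k l * Amat b B l k) := fun k l => by ring
    simp_rw [this, ← Finset.mul_sum]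
    rw [trace_CA b B hCA]
    ring
  have hU1 : (∑ k, ∑ l, Cmat b B k l • ((2:ℝ) • (ExteriorAlgebra.ι ℝ (yv b B l) * Pk b k u)))
      = (2:ℝ) • Nop b u := by
    have inner : ∀ k, (∑ l, Cmat b B k l • ((2:ℝ) • (ExteriorAlgebra.ι ℝ (yv b B l) * Pk b k u)))
        = (2:ℝ) • (xg b k * Pk b k u) := by
      intro k
      have h1 : ∀ l, Cmat b B k l • ((2:ℝ) • (ExteriorAlgebra.ι ℝ (yv b B l) * Pk b k u))
          = (2:ℝ) • ((Cmat b B k l • ExteriorAlgebra.ι ℝ (yv b B l)) * Pk b k u) := by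
        intro l
        rw [smul_mul_assoc, smul_comm]
      simp_rw [h1, ← Finset.smul_sum, ← Finset.sum_mul, ← map_smul, ← map_sum,
        sumC_yv b B hCA]
      rfl
    simp_rw [inner, ← Finset.smul_sum, ← Nop_apply]
  have hU2 : (∑ k, ∑ l, Cmat b B k l • ((2:ℝ) • (ExteriorAlgebra.ι ℝ (yv b B k) * Pk b l u)))
      = -((2:ℝ) • Nop b u) := by
    rw [Finset.sum_comm]
    have inner : ∀ l, (∑ k, Cmat b B k l • ((2:ℝ) • (ExteriorAlgebra.ι ℝ (yv b B k) * Pk b l u)))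
        = -((2:ℝ) • (xg b l * Pk b l u)) := by
      intro l
      have h1 : ∀ k, Cmat b B k l • ((2:ℝ) • (ExteriorAlgebra.ι ℝ (yv b B k) * Pk b l u))
          = (2:ℝ) • ((Cmat b B k l • ExteriorAlgebra.ι ℝ (yv b B k)) * Pk b l u) := by
        intro k
        rw [smul_mul_assoc, smul_comm]
      simp_rw [h1, ← Finset.smul_sum, ← Finset.sum_mul, ← map_smul, ← map_sum,
        sumC_yv' b B hCA hCanti]
      rw [map_neg, neg_mul, smul_neg]
      rfl
    simp_rw [inner, Finset.sum_neg_distrib, ← Finset.smul_sum, ← Nop_apply]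
  have hU3 : (∑ k, ∑ l, Cmat b B k l • (ωf b B * Pk b k (Pk b l u)))
      = ωf b B * Kop b B u := by
    rw [Kop_apply, Finset.mul_sum]
    refine Finset.sum_congr rfl fun k _ => ?_
    rw [Finset.mul_sum]
    refine Finset.sum_congr rfl fun l _ => ?_
    rw [mul_smul_comm]
  calc Kop b B (ωf b B * u)
      = ∑ k, ∑ l, Cmat b B k l • Pk b k (Pk b l (ωf b B * u)) := Kop_apply b B _
    _ = ∑ k, ∑ l, Cmat b B k l • ((2:ℝ) • (Amat b B l k • u)
          - (2:ℝ) • (ExteriorAlgebra.ι ℝ (yv b B l) * Pk b k u)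
          + (2:ℝ) • (ExteriorAlgebra.ι ℝ (yv b B k) * Pk b l u)
          + ωf b B * Pk b k (Pk b l u)) := by
        simp_rw [PP_omega b B hanti]
    _ = (∑ k, ∑ l, Cmat b B k l • ((2:ℝ) • (Amat b B l k • u)))
          - (∑ k, ∑ l, Cmat b B k l • ((2:ℝ) • (ExteriorAlgebra.ι ℝ (yv b B l) * Pk b k u)))
          + (∑ k, ∑ l, Cmat b B k l • ((2:ℝ) • (ExteriorAlgebra.ι ℝ (yv b B k) * Pk b l u)))
          + (∑ k, ∑ l, Cmat b B k l • (ωf b B * Pk b k (Pk b l u))) := by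
        simp_rw [smul_add, smul_sub, Finset.sum_add_distrib, Finset.sum_sub_distrib]
    _ = ωf b B * Kop b B u + ((4 * n : ℝ)) • u - (4:ℝ) • Nop b u := by
        rw [hU0, hU1, hU2, hU3]
        have h4 : (4:ℝ) • Nop b u = (2:ℝ) • Nop b u + (2:ℝ) • Nop b u := by
          rw [← add_smul]; norm_num
        rw [h4]
        abel



lemma mul_mem_pow_succ (w : Module.Dual ℝ V) (z : E) (i : ℕ)
    (hz : z ∈ ⋀[ℝ]^i (Module.Dual ℝ V)) :
    ExteriorAlgebra.ι ℝ w * z ∈ ⋀[ℝ]^(i+1) (Module.Dual ℝ V) := by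
  have h1 : (⋀[ℝ]^(i+1) (Module.Dual ℝ V) : Submodule ℝ E)
      = LinearMap.range (ExteriorAlgebra.ι ℝ (M := Module.Dual ℝ V)) * ⋀[ℝ]^i (Module.Dual ℝ V) :=
    pow_succ' _ _
  rw [h1]
  exact Submodule.mul_mem_mul (LinearMap.mem_range_self _ _) hz

lemma Nop_grading (q : ℕ) (u : E) (hu : u ∈ ⋀[ℝ]^q (Module.Dual ℝ V)) :
    Nop b u = (q : ℝ) • u := by
  induction hu using Submodule.pow_induction_on_left' with
  | algebraMap r =>
      rw [Nop_apply]
      simp [Pk_algebraMap]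
  | add x y i hx hy ihx ihy => rw [map_add, ihx, ihy, smul_add]
  | mem_mul m hm i x hx ih =>
      obtain ⟨w, rfl⟩ := hm
      rw [Nop_apply]
      simp_rw [Pk_ι_mul, mul_sub, mul_smul_comm]
      rw [Finset.sum_sub_distrib]
      have h1 : (∑ k, w (b k) • (xg b k * x)) = ExteriorAlgebra.ι ℝ w * x := by
        simp_rw [← smul_mul_assoc, ← Finset.sum_mul]
        congr 1
        simp_rw [xg, ← map_smul, ← map_sum]
        rw [Basis.sum_dual_apply_smul_coord]
      have h2 : (∑ k, xg b k * (ExteriorAlgebra.ι ℝ w * Pk b k x))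
          = - (ExteriorAlgebra.ι ℝ w * Nop b x) := by
        have h3 : ∀ k, xg b k * (ExteriorAlgebra.ι ℝ w * Pk b k x)
            = -(ExteriorAlgebra.ι ℝ w * (xg b k * Pk b k x)) := by
          intro k
          rw [← mul_assoc, ← mul_assoc, xg, ι_anticomm, neg_mul]
        simp_rw [h3, Finset.sum_neg_distrib, ← Finset.mul_sum, ← Nop_apply]
      rw [h1, h2, ih, sub_neg_eq_add, mul_smul_comm]
      push_cast
      rw [add_smul, one_smul]
      abel

lemma contract_grading (d : Module.Dual ℝ (Module.Dual ℝ V)) (q : ℕ) (u : E)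
    (hu : u ∈ ⋀[ℝ]^q (Module.Dual ℝ V)) :
    ((CliffordAlgebra.contractLeft (Q := (0 : QuadraticForm ℝ (Module.Dual ℝ V))) d) u
        ∈ ⋀[ℝ]^(q - 1) (Module.Dual ℝ V))
      ∧ (q = 0 →
        (CliffordAlgebra.contractLeft (Q := (0 : QuadraticForm ℝ (Module.Dual ℝ V))) d) u = 0) := by
  induction hu using Submodule.pow_induction_on_left' with
  | algebraMap r =>
      refine ⟨?_, fun _ => ?_⟩
      · rw [CliffordAlgebra.contractLeft_algebraMap]; exact zero_mem _
      · rw [CliffordAlgebra.contractLeft_algebraMap]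
  | add x y i hx hy ihx ihy =>
      refine ⟨?_, fun h => ?_⟩
      · rw [map_add]; exact add_mem ihx.1 ihy.1
      · rw [map_add, ihx.2 h, ihy.2 h, add_zero]
  | mem_mul m hm i x hx ih =>
      obtain ⟨w, rfl⟩ := hm
      rw [CliffordAlgebra.contractLeft_ι_mul]
      refine ⟨?_, fun h => by omega⟩
      rcases Nat.eq_zero_or_pos i with h0 | hpos
      · subst h0
        rw [ih.2 rfl, mul_zero, sub_zero]
        exact Submodule.smul_mem _ _ hx
      · obtain ⟨i', rfl⟩ : ∃ i', i = i' + 1 := ⟨i - 1, by omega⟩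
        refine sub_mem (Submodule.smul_mem _ _ hx) ?_
        have hmem := ih.1
        simpa using mul_mem_pow_succ (V := V) w _ i' hmem

lemma Pk_grading (k : Fin (2 * n)) (q : ℕ) (u : E) (hu : u ∈ ⋀[ℝ]^q (Module.Dual ℝ V)) :
    (Pk b k u ∈ ⋀[ℝ]^(q - 1) (Module.Dual ℝ V)) ∧ (q = 0 → Pk b k u = 0) :=
  contract_grading (Module.Dual.eval ℝ V (b k)) q u hu

lemma Kop_grading (q : ℕ) (u : E) (hu : u ∈ ⋀[ℝ]^q (Module.Dual ℝ V)) :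
    Kop b B u ∈ ⋀[ℝ]^(q - 2) (Module.Dual ℝ V) := by
  rw [Kop_apply]
  refine Submodule.sum_mem _ fun k _ => Submodule.sum_mem _ fun l _ => Submodule.smul_mem _ _ ?_
  have h1 := (Pk_grading b l q u hu).1
  have h2 := (Pk_grading b k (q - 1) _ h1).1
  have : q - 1 - 1 = q - 2 := by omega
  rw [this] at h2
  exact h2

lemma Kop_low (j : ℕ) (hj : j ≤ 1) (u : E) (hu : u ∈ ⋀[ℝ]^j (Module.Dual ℝ V)) :
    Kop b B u = 0 := by
  rw [Kop_apply]
  refine Finset.sum_eq_zero fun k _ => Finset.sum_eq_zero fun l _ => ?_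
  interval_cases j
  · rw [(Pk_grading b l 0 u hu).2 rfl, map_zero, smul_zero]
  · have h1 := (Pk_grading b l 1 u hu).1
    rw [(Pk_grading b k 0 _ h1).2 rfl, smul_zero]


lemma Amat_isUnit (halt : ∀ v : V, B v v = 0)
    (hnd : ∀ v : V, (∀ u : V, B v u = 0) → v = 0) :
    IsUnit (Amat b B) := by
  have hskew : ∀ v w : V, B w v = - B v w := by
    intro v w
    have h := halt (v + w)
    simp only [map_add, LinearMap.add_apply, halt] at h
    linarith
  rw [← Matrix.mulVec_injective_iff_isUnit]
  have : Function.Injective (Amat b B).mulVecLin := by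
    rw [← LinearMap.ker_eq_bot, LinearMap.ker_eq_bot']
    intro c hc
    have hu : ∀ j, B (b j) (∑ l, c l • b l) = 0 := by
      intro j
      have h1 := congrFun hc j
      simp only [Matrix.mulVecLin_apply] at h1
      rw [map_sum]
      simpa [Matrix.mulVec, dotProduct, Amat, mul_comm] using h1
    have hw : (∑ l, c l • b l) = 0 := by
      apply hnd
      intro u
      rw [← neg_eq_zero, ← hskew]
      have hu' : ∀ j, (∑ x, c x * B (b j) (b x)) = 0 := by
        intro j
        have h2 := hu j
        rw [map_sum] at h2
        simpa [mul_comm] using h2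
      have hrepr := b.sum_repr u
      rw [← hrepr, map_sum]
      simp only [map_smul, LinearMap.smul_apply, LinearMap.coe_sum, Finset.sum_apply,
        smul_eq_mul]
      simp only [map_sum, map_smul, LinearMap.coe_sum, Finset.sum_apply,
        LinearMap.smul_apply, smul_eq_mul, Finset.mul_sum]
      rw [Finset.sum_comm]
      refine Finset.sum_eq_zero fun j _ => ?_
      have hterm : ∀ x, c x * ((b.repr u) j * B (b j) (b x))
          = (b.repr u) j * (c x * B (b j) (b x)) := fun x => by ring
      simp_rw [hterm, ← Finset.mul_sum, hu', mul_zero]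
    have := Fintype.linearIndependent_iff.mp b.linearIndependent c hw
    funext i; exact this i
  exact this

lemma omega_eq (halt : ∀ v : V, B v v = 0) :
    ωf b B = (2:ℝ) • (∑ i, ∑ j,
      if i < j then
        B (b i) (b j) •
          (ExteriorAlgebra.ι ℝ (b.coord i) * ExteriorAlgebra.ι ℝ (b.coord j))
      else 0) := by
  have hskew : ∀ v w : V, B w v = - B v w := by
    intro v w
    have h := halt (v + w)
    simp only [map_add, LinearMap.add_apply, halt] at h
    linarith
  have hanti : ∀ i j, Amat b B j i = - Amat b B i j := fun i j => hskew (b i) (b j)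
  have hdiag : ∀ i, Amat b B i i = 0 := fun i => halt (b i)
  have hS : (∑ i, ∑ j, if i < j then
        B (b i) (b j) •
          (ExteriorAlgebra.ι ℝ (b.coord i) * ExteriorAlgebra.ι ℝ (b.coord j))
      else 0)
      = ∑ i, ∑ j, if i < j then Amat b B i j • (xg b i * xg b j) else 0 := rfl
  rw [hS]
  have hsplit : ∀ i j : Fin (2*n), Amat b B i j • (xg b i * xg b j)
      = (if i < j then Amat b B i j • (xg b i * xg b j) else 0)
        + (if j < i then Amat b B i j • (xg b i * xg b j) else 0) := by
    intro i j
    rcases lt_trichotomy i j with h|h|h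
    · rw [if_pos h, if_neg (not_lt_of_gt h), add_zero]
    · subst h
      rw [if_neg (lt_irrefl i), add_zero, hdiag, zero_smul]
    · rw [if_neg (not_lt_of_gt h), if_pos h, zero_add]
  rw [ωf]
  rw [show (∑ i, ∑ j, Amat b B i j • (xg b i * xg b j))
      = ∑ i, ∑ j, ((if i < j then Amat b B i j • (xg b i * xg b j) else 0)
        + (if j < i then Amat b B i j • (xg b i * xg b j) else 0)) from
    Finset.sum_congr rfl fun i _ => Finset.sum_congr rfl fun j _ => hsplit i j]
  simp_rw [Finset.sum_add_distrib]
  have h2 : (∑ i, ∑ j, if j < i then Amat b B i j • (xg b i * xg b j) else 0)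
      = ∑ i, ∑ j, if i < j then Amat b B i j • (xg b i * xg b j) else 0 := by
    rw [Finset.sum_comm]
    refine Finset.sum_congr rfl fun i _ => Finset.sum_congr rfl fun j _ => ?_
    rcases lt_or_ge i j with h|h
    · rw [if_pos h, if_pos h, hanti i j, xg, xg, ι_anticomm]
      rw [neg_smul, smul_neg, neg_neg]
    · rw [if_neg (not_lt_of_ge h), if_neg (not_lt_of_ge h)]
  rw [h2, two_smul]

theorem key (hn : 0 < n) (halt : ∀ v : V, B v v = 0)
    (hnd : ∀ v : V, (∀ w : V, B v w = 0) → v = 0)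
    (q : ℕ) (hq : q ≤ n - 1) (u : E)
    (hu : u ∈ ⋀[ℝ]^q (Module.Dual ℝ V)) (h0 : ωf b B * u = 0) : u = 0 := by
  have hskew : ∀ v w : V, B w v = - B v w := by
    intro v w
    have h := halt (v + w)
    simp only [map_add, LinearMap.add_apply, halt] at h
    linarith
  have hanti : ∀ i j, Amat b B j i = - Amat b B i j := fun i j => hskew (b i) (b j)
  have hunit : IsUnit (Amat b B) := Amat_isUnit b B halt hnd
  have hdet : IsUnit (Amat b B).det := (Matrix.isUnit_iff_isUnit_det _).mp hunit
  have hCA : Cmat b B * Amat b B = 1 := Matrix.nonsing_inv_mul _ hdet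
  have hAT : (Amat b B)ᵀ = - Amat b B := by
    ext i j
    rw [Matrix.transpose_apply, Matrix.neg_apply]
    exact hanti i j
  have hCT : (Cmat b B)ᵀ = - Cmat b B := by
    rw [Cmat, Matrix.transpose_nonsing_inv, hAT]
    refine Matrix.inv_eq_right_inv ?_
    rw [Matrix.neg_mul, Matrix.mul_neg, neg_neg]
    exact Matrix.mul_nonsing_inv _ hdet
  have hCanti : ∀ k l, Cmat b B l k = - Cmat b B k l := by
    intro k l
    have h1 := congrFun (congrFun hCT k) l
    simpa [Matrix.transpose_apply, Matrix.neg_apply] using h1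
  set c : ℕ → ℝ := fun m => -4 * m * ((n:ℝ) - q + m - 1) with hc
  have hqn : (q:ℝ) + 1 ≤ (n:ℝ) := by
    have : q + 1 ≤ n := by omega
    exact_mod_cast this
  have hcne : ∀ m : ℕ, c (m+1) ≠ 0 := by
    intro m
    have h2 : (0:ℝ) < (n:ℝ) - q + (m+1) - 1 := by linarith
    have hlt : c (m+1) < 0 := by
      rw [hc]
      push_cast
      nlinarith [Nat.cast_nonneg (α := ℝ) m]
    exact ne_of_lt hlt
  have hpow : ∀ m : ℕ, (Kop b B ^ (m+1)) u = Kop b B ((Kop b B ^ m) u) := by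
    intro m
    rw [pow_succ']
    rfl
  have hmem : ∀ m : ℕ, (Kop b B ^ m) u ∈ ⋀[ℝ]^(q - 2*m) (Module.Dual ℝ V) := by
    intro m
    induction m with
    | zero => simpa using hu
    | succ m ih =>
        rw [hpow m]
        have h1 := Kop_grading b B (q - 2*m) _ ih
        have he : q - 2*m - 2 = q - 2*(m+1) := by omega
        rwa [he] at h1
  have hLm : ∀ m : ℕ, 2*m ≤ q →
      ωf b B * ((Kop b B ^ (m+1)) u) = c (m+1) • ((Kop b B ^ m) u) := by
    intro m
    induction m with
    | zero =>
        intro _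
        have h1 : (Kop b B ^ 1) u = Kop b B u := pow_one (Kop b B) ▸ rfl
        have h2 : (Kop b B ^ 0) u = u := by rw [pow_zero]; rfl
        rw [h1, h2]
        have hKω := Kop_omega b B hanti hCA hCanti u
        rw [h0, map_zero] at hKω
        have hN : Nop b u = (q:ℝ) • u := Nop_grading b q u hu
        rw [hN] at hKω
        have h3 : ωf b B * Kop b B u
            = (4:ℝ) • ((q:ℝ) • u) - ((4 * n : ℝ)) • u := by
          rw [eq_sub_iff_add_eq, ← sub_eq_iff_eq_add] at hKω
          linear_combination (norm := (push_cast; abel)) - hKω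
        rw [h3, smul_smul, ← sub_smul]
        congr 1
        rw [hc]
        push_cast
        ring
    | succ m ih =>
        intro h2m
        have hih := ih (by omega)
        rw [hpow (m+1)]
        have hKω := Kop_omega b B hanti hCA hCanti ((Kop b B ^ (m+1)) u)
        rw [hih, map_smul, ← hpow m] at hKω
        have hN : Nop b ((Kop b B ^ (m+1)) u)
            = ((q - 2*(m+1) : ℕ) : ℝ) • ((Kop b B ^ (m+1)) u) :=
          Nop_grading b _ _ (hmem (m+1))
        rw [hN, smul_smul] at hKω
        have h6 : ωf b B * Kop b B ((Kop b B ^ (m+1)) u)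
            = (c (m+1) - 4*(n:ℝ) + 4 * ((q - 2*(m+1) : ℕ) : ℝ)) • ((Kop b B ^ (m+1)) u) := by
          rw [add_smul, sub_smul]
          linear_combination (norm := abel) - hKω
        rw [h6]
        congr 1
        rw [hc, Nat.cast_sub h2m]
        push_cast
        ring
  -- termination of the chain
  have hlow : (Kop b B ^ (q/2 + 1)) u = 0 := by
    rw [hpow (q/2)]
    exact Kop_low b B (q - 2*(q/2)) (by omega) _ (hmem (q/2))
  have hdown : ∀ i, i ≤ q/2 + 1 → (Kop b B ^ (q/2 + 1 - i)) u = 0 := by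
    intro i
    induction i with
    | zero => intro _; simpa using hlow
    | succ i ih =>
        intro hi
        have h1 := ih (by omega)
        have hieq : q/2 + 1 - i = (q/2 - i) + 1 := by omega
        rw [hieq] at h1
        have h2 := hLm (q/2 - i) (by omega)
        rw [h1, mul_zero] at h2
        have h3 := (smul_eq_zero.mp h2.symm).resolve_left (hcne (q/2 - i))
        have hieq2 : q/2 + 1 - (i+1) = q/2 - i := by omega
        rw [hieq2]
        exact h3
  have hfin := hdown (q/2 + 1) le_rfl
  simpa using hfin

end Stmt10Aux


set_option synthInstance.maxHeartbeats 1000000 in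
set_option maxHeartbeats 4000000 in
/-- Let `V` be a real symplectic vector space of dimension `2n` with
symplectic form `ω` (a nondegenerate alternating bilinear form `B`, represented in the
exterior algebra of `V*` by `ω = ∑_{i<j} B(e_i, e_j) e^i ∧ e^j` for a basis `e`).
Then the Lefschetz map `L : Λ^q V* → Λ^{q+2} V*`, `L(u) = ω ∧ u`, is injective for all
`q ≤ n − 1`. -/
theorem stmt10 (V : Type*) [AddCommGroup V] [Module ℝ V] (n : ℕ) (hn : 0 < n)
    (b : Module.Basis (Fin (2 * n)) ℝ V)
    (B : V →ₗ[ℝ] V →ₗ[ℝ] ℝ)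
    (halt : ∀ v : V, B v v = 0)
    (hnd : ∀ v : V, (∀ u : V, B v u = 0) → v = 0)
    (q : ℕ) (hq : q ≤ n - 1) :
    ∀ u ∈ ⋀[ℝ]^q (Module.Dual ℝ V),
      (∑ i : Fin (2 * n), ∑ j : Fin (2 * n),
          if i < j then
            B (b i) (b j) •
              (ExteriorAlgebra.ι ℝ (b.coord i) * ExteriorAlgebra.ι ℝ (b.coord j))
          else 0) * u = 0 → u = 0 := by
  intro u hu h0
  refine Stmt10Aux.key b B hn halt hnd q hq u hu ?_
  rw [Stmt10Aux.omega_eq b B halt, smul_mul_assoc, h0, smul_zero]
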